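/- Full rank of the Hankel matrix associated with G(x) = (8/(b−c)²)·(1 − ((b+c)/2)x − √((1−bx)(1−cx)))/x²: for nonzero complex numbers b ≠ c and every d ∈ ℕ, the (d+1)×(d+1) Hankel matrix with (i,j)-entry equal to the coefficient of x^{i+j} in G is invertible. -/

import Mathlib

open PowerSeries Finset

namespace HankelAux

variable (s t : ℂ) (G : PowerSeries ℂ)

/-- coefficient of paths: P n h = coeff n ((X*G)^h * G) -/
noncomputable def P (n h : ℕ) : ℂ := PowerSeries.coeff n ((PowerSeries.X * G)^h * G)

variable (hq : G = 1 + PowerSeries.C s * PowerSeries.X * G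
    + PowerSeries.C t * PowerSeries.X^2 * G^2)

include hq

lemma rec_series (h : ℕ) : (X * G)^(h+1) * G
    = X * ((X*G)^h * G + PowerSeries.C s * ((X*G)^(h+1) * G)
        + PowerSeries.C t * ((X*G)^(h+2) * G)) := by
  linear_combination (X * (X*G)^h * G) * hq

lemma rec0 : G = 1 + X * (PowerSeries.C s * ((X*G)^0 * G)
    + PowerSeries.C t * ((X*G)^1 * G)) := by
  linear_combination hq

lemma Pr1 (n h : ℕ) : P G (n+1) (h+1) = P G n h + s * P G n (h+1) + t * P G n (h+2) := by
  unfold P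
  conv_lhs => rw [rec_series s t G hq h]
  rw [coeff_succ_X_mul]
  simp [mul_add, map_add]

lemma Pr0 (n : ℕ) : P G (n+1) 0 = s * P G n 0 + t * P G n 1 := by
  unfold P
  rw [pow_zero, one_mul]
  nth_rewrite 1 [rec0 s t G hq]
  rw [map_add, coeff_succ_X_mul]
  simp [PowerSeries.coeff_one]

end HankelAux

namespace HankelAux
variable (s t : ℂ) (G : PowerSeries ℂ)

lemma P_eq (n h : ℕ) : P G n h = if h ≤ n then PowerSeries.coeff (n - h) (G^(h+1)) else 0 := by
  unfold P
  rw [mul_pow, mul_assoc, ← pow_succ, coeff_X_pow_mul']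

lemma P_vanish {n h : ℕ} (hlt : n < h) : P G n h = 0 := by
  rw [P_eq, if_neg (by omega)]

variable (hq : G = 1 + PowerSeries.C s * PowerSeries.X * G
    + PowerSeries.C t * PowerSeries.X^2 * G^2)
include hq

lemma cc_G : PowerSeries.constantCoeff G = 1 := by
  conv_lhs => rw [hq]
  simp

lemma P_diag (n : ℕ) : P G n n = 1 := by
  rw [P_eq, if_pos le_rfl, Nat.sub_self, PowerSeries.coeff_zero_eq_constantCoeff, map_pow,
    cc_G s t G hq, one_pow]

lemma P_zero (h : ℕ) : P G 0 h = if h = 0 then 1 else 0 := by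
  rcases h with _ | h
  · simpa using P_diag s t G hq 0
  · simp [P_vanish G (by omega : 0 < h+1)]

end HankelAux

namespace HankelAux
variable (s t : ℂ) (G : PowerSeries ℂ)
variable (hq : G = 1 + PowerSeries.C s * PowerSeries.X * G
    + PowerSeries.C t * PowerSeries.X^2 * G^2)

/-- The symmetric middle expression. -/
noncomputable def Tsym (i j M : ℕ) : ℂ :=
  ∑ h ∈ range (M+1), (s * t^h * P G i h * P G j h
    + t^(h+1) * P G i h * P G j (h+1) + t^(h+1) * P G i (h+1) * P G j h)

lemma Tsym_comm (i j M : ℕ) : Tsym s t G i j M = Tsym s t G j i M :=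
  Finset.sum_congr rfl fun h _ => by ring

include hq

lemma step (i j M : ℕ) (hj : j ≤ M) :
    ∑ h ∈ range (M+1), t^h * P G (i+1) h * P G j h = Tsym s t G i j M := by
  have e1 : ∑ h ∈ range (M+1), t^h * P G (i+1) h * P G j h
      = (∑ h ∈ range M, s * t^(h+1) * P G i (h+1) * P G j (h+1))
        + (∑ h ∈ range M, t^(h+1) * P G i h * P G j (h+1))
        + (∑ h ∈ range M, t^(h+2) * P G i (h+2) * P G j (h+1))
        + (s * P G i 0 * P G j 0 + t * P G i 1 * P G j 0) := by
    rw [Finset.sum_range_succ']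
    have h0 : (t:ℂ)^0 * P G (i+1) 0 * P G j 0
        = s * P G i 0 * P G j 0 + t * P G i 1 * P G j 0 := by
      rw [Pr0 s t G hq i]; ring
    have h1 : ∀ h ∈ range M, t^(h+1) * P G (i+1) (h+1) * P G j (h+1)
        = s * t^(h+1) * P G i (h+1) * P G j (h+1)
          + t^(h+1) * P G i h * P G j (h+1)
          + t^(h+2) * P G i (h+2) * P G j (h+1) := by
      intro h _
      rw [Pr1 s t G hq i h]; ring
    rw [Finset.sum_congr rfl h1, Finset.sum_add_distrib, Finset.sum_add_distrib, h0]
  have e2 : Tsym s t G i j M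
      = (∑ h ∈ range M, s * t^(h+1) * P G i (h+1) * P G j (h+1))
        + (∑ h ∈ range M, t^(h+1) * P G i h * P G j (h+1))
        + (∑ h ∈ range M, t^(h+2) * P G i (h+2) * P G j (h+1))
        + (s * P G i 0 * P G j 0 + t * P G i 1 * P G j 0) := by
    unfold Tsym
    rw [Finset.sum_add_distrib, Finset.sum_add_distrib]
    have a1 : ∑ h ∈ range (M+1), s * t^h * P G i h * P G j h
        = (∑ h ∈ range M, s * t^(h+1) * P G i (h+1) * P G j (h+1))
          + s * P G i 0 * P G j 0 := by
      rw [Finset.sum_range_succ']; ring_nf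
    have a2 : ∑ h ∈ range (M+1), t^(h+1) * P G i h * P G j (h+1)
        = ∑ h ∈ range M, t^(h+1) * P G i h * P G j (h+1) := by
      rw [Finset.sum_range_succ, P_vanish G (by omega : j < M+1), mul_zero, add_zero]
    have a3 : ∑ h ∈ range (M+1), t^(h+1) * P G i (h+1) * P G j h
        = (∑ h ∈ range M, t^(h+2) * P G i (h+2) * P G j (h+1))
          + t * P G i 1 * P G j 0 := by
      rw [Finset.sum_range_succ']
      exact congrArg₂ (· + ·) (Finset.sum_congr rfl fun h _ => by ring) (by ring)
    rw [a1, a2, a3]; ring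
  rw [e1, e2]

lemma swap (i j M : ℕ) (hi : i ≤ M) (hj : j ≤ M) :
    ∑ h ∈ range (M+1), t^h * P G (i+1) h * P G j h
      = ∑ h ∈ range (M+1), t^h * P G i h * P G (j+1) h := by
  rw [step s t G hq i j M hj, Tsym_comm, ← step s t G hq j i M hi]
  exact Finset.sum_congr rfl fun h _ => by ring

lemma key (N : ℕ) : ∀ i j : ℕ, i + j + 2 ≤ N →
    ∑ h ∈ range N, t^h * P G i h * P G j h = PowerSeries.coeff (i+j) G := by
  intro i
  induction i with
  | zero =>
    intro j hN
    rw [Finset.sum_eq_single_of_mem 0 (Finset.mem_range.mpr (by omega))]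
    · simp [P, cc_G s t G hq]
    · intro h _ hh
      rw [P_zero s t G hq, if_neg hh]
      ring
  | succ i ih =>
    intro j hN
    obtain ⟨M, rfl⟩ : ∃ M, N = M + 1 := ⟨N - 1, by omega⟩
    rw [swap s t G hq i j M (by omega) (by omega), ih (j+1) (by omega),
      show i + (j+1) = i+1+j by omega]

end HankelAux

namespace HankelAux
open Matrix

lemma hankel_aux (s t : ℂ) (ht : t ≠ 0) (G : PowerSeries ℂ)
    (hq : G = 1 + PowerSeries.C s * PowerSeries.X * G
      + PowerSeries.C t * PowerSeries.X^2 * G^2) (d : ℕ) :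
    IsUnit (Matrix.of fun (i j : Fin (d + 1)) => PowerSeries.coeff ((i : ℕ) + j) G) := by
  classical
  set L : Matrix (Fin (d+1)) (Fin (d+1)) ℂ := Matrix.of fun i h => P G (i : ℕ) (h : ℕ) with hL
  set D : Matrix (Fin (d+1)) (Fin (d+1)) ℂ :=
    Matrix.diagonal (fun h : Fin (d+1) => t^(h : ℕ)) with hD
  have hH : (Matrix.of fun (i j : Fin (d + 1)) => PowerSeries.coeff ((i : ℕ) + j) G)
      = L * D * Lᵀ := by
    ext i j
    rw [Matrix.mul_apply]
    simp only [Matrix.mul_diagonal, Matrix.transpose_apply, Matrix.of_apply, hL, hD]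
    rw [← key s t G hq (2*d+2) i j (by omega), Fin.sum_univ_eq_sum_range
      (fun h => P G i h * t^h * P G j h) (d+1)]
    refine (Finset.sum_subset (Finset.range_subset_range.mpr (by omega)) ?_).symm.trans
      (Finset.sum_congr rfl fun h _ => by ring)
    intro h _ hh
    rw [P_vanish G (show (i:ℕ) < h by simp only [Finset.mem_range, not_lt] at hh; omega)]
    ring
  rw [hH, Matrix.isUnit_iff_isUnit_det, Matrix.det_mul, Matrix.det_mul,
    Matrix.det_transpose]
  have hLtri : L.BlockTriangular OrderDual.toDual := by
    intro i j hij
    exact P_vanish G (show (i:ℕ) < j from hij)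
  have hLdet : L.det = 1 := by
    rw [Matrix.det_of_lowerTriangular L hLtri]
    exact Finset.prod_eq_one fun i _ => P_diag s t G hq i
  have hDdet : D.det ≠ 0 := by
    rw [hD, Matrix.det_diagonal]
    exact Finset.prod_ne_zero_iff.mpr fun h _ => pow_ne_zero _ ht
  rw [hLdet, one_mul, mul_one]
  exact isUnit_iff_ne_zero.mpr hDdet

end HankelAux

open PowerSeries in
/-- Full rank of the Hankel matrix of
`G = (8/(b−c)²)·(1 − ((b+c)/2)x − √((1−bx)(1−cx)))/x²`: for nonzero `b ≠ c`
and every `d`, the `(d+1)×(d+1)` Hankel matrix of coefficients of `G` is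
invertible. -/
theorem hankel_G_full_rank (b c : ℂ) (hb : b ≠ 0) (hc : c ≠ 0) (hbc : b ≠ c)
    (f G : PowerSeries ℂ)
    (hf0 : PowerSeries.coeff 0 f = 1)
    (hf : f ^ 2 = (1 - PowerSeries.C b * PowerSeries.X)
      * (1 - PowerSeries.C c * PowerSeries.X))
    (hG : PowerSeries.X ^ 2 * G = PowerSeries.C (8 / (b - c) ^ 2)
      * (1 - PowerSeries.C ((b + c) / 2) * PowerSeries.X - f)) (d : ℕ) :
    IsUnit (Matrix.of fun (i j : Fin (d + 1)) => PowerSeries.coeff ((i : ℕ) + j) G) := by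
  set s : ℂ := (b + c) / 2 with hs
  set t : ℂ := (b - c) ^ 2 / 16 with hts
  have hbc' : b - c ≠ 0 := sub_ne_zero.mpr hbc
  have hk : (b - c) ^ 2 ≠ 0 := pow_ne_zero _ hbc'
  have ht : t ≠ 0 := div_ne_zero hk (by norm_num)
  have hCt : PowerSeries.C t ≠ 0 := fun h => ht (by
    have := PowerSeries.C_injective (R := ℂ) (h.trans (map_zero _).symm); exact this)
  have hinv : PowerSeries.C ((b - c) ^ 2 / 8) * PowerSeries.C (8 / (b - c) ^ 2)
      = 1 := by
    rw [← map_mul]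
    rw [show (b - c) ^ 2 / 8 * (8 / (b - c) ^ 2) = 1 by field_simp]
    exact map_one _
  have h1 : PowerSeries.C ((b - c) ^ 2 / 8) * (X ^ 2 * G)
      = 1 - PowerSeries.C s * X - f := by
    rw [hG, ← mul_assoc, hinv, one_mul]
  have h2t : PowerSeries.C ((b - c) ^ 2 / 8) = 2 * PowerSeries.C t := by
    rw [show (2 : PowerSeries ℂ) = PowerSeries.C 2 from (map_ofNat _ 2).symm, ← map_mul]
    congr 1
    rw [hts]; ring
  have hf' : f = 1 - PowerSeries.C s * X - 2 * PowerSeries.C t * (X ^ 2 * G) := by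
    linear_combination h1 - (X ^ 2 * G) * h2t
  have E1 : PowerSeries.C s * 2 = PowerSeries.C b + PowerSeries.C c := by
    rw [show (2 : PowerSeries ℂ) = PowerSeries.C 2 from (map_ofNat _ 2).symm,
      ← map_mul, ← map_add]
    congr 1
    rw [hs]; ring
  have E2 : PowerSeries.C t * 16 = (PowerSeries.C b - PowerSeries.C c) ^ 2 := by
    rw [show (16 : PowerSeries ℂ) = PowerSeries.C 16 from (map_ofNat _ 16).symm,
      ← map_mul, ← map_sub, ← map_pow]
    congr 1
    rw [hts]; ring
  have hfs : (1 - PowerSeries.C s * X - 2 * PowerSeries.C t * (X ^ 2 * G)) ^ 2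
      = (1 - PowerSeries.C b * X) * (1 - PowerSeries.C c * X) := by
    rw [← hf']; exact hf
  have h16 : ((16 : PowerSeries ℂ) * PowerSeries.C t) * (X ^ 2 * G)
      = ((16 : PowerSeries ℂ) * PowerSeries.C t)
        * (X ^ 2 * (1 + PowerSeries.C s * X * G + PowerSeries.C t * X ^ 2 * G ^ 2)) := by
    linear_combination (-4 : PowerSeries ℂ) * hfs
      + (-4 * X + X ^ 2 * (2 * PowerSeries.C s + PowerSeries.C b + PowerSeries.C c)) * E1
      + (- X ^ 2) * E2
  have h16ne : (16 : PowerSeries ℂ) * PowerSeries.C t ≠ 0 := by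
    refine mul_ne_zero ?_ hCt
    rw [show (16 : PowerSeries ℂ) = PowerSeries.C 16 from (map_ofNat _ 16).symm]
    intro h
    have := PowerSeries.C_injective (R := ℂ) (h.trans (map_zero _).symm)
    norm_num at this
  have hXG := mul_left_cancel₀ h16ne h16
  have hq : G = 1 + PowerSeries.C s * X * G + PowerSeries.C t * X ^ 2 * G ^ 2 :=
    mul_left_cancel₀ (pow_ne_zero 2 PowerSeries.X_ne_zero) hXG
  exact HankelAux.hankel_aux s t ht G hq d
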